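/- Let N ≥ 2, let Ω be a convex bounded domain in ℝ^d, and let (u_1,…,u_{N−1}) be a jointly N-monotone (N−1)-tuple of bounded vector fields on Ω. Define f(x_1,…,x_N) = ∑_{ℓ=1}^{N−1} ⟨u_ℓ(x_1), x_1 − x_{ℓ+1}⟩ and let f̃ be the convexification of f in the first variable: f̃(x_1,…,x_N) = inf{ ∑_{k=1}^{n} λ_k f(x_1^k, x_2,…,x_N) : n ∈ ℕ, λ_k ≥ 0, ∑_k λ_k = 1, x_1^k ∈ Ω, ∑_k λ_k x_1^k = x_1 }. Then: (1) f ≥ f̃ on Ω^N; (2) f̃ is convex in the first variable and concave in the last N−1 variables; (3) f̃(x,x,…,x) = 0 for every x ∈ Ω; and (4) ∑_{i=0}^{N−1} f̃(σ^i(x_1,…,x_N)) ≥ 0 for all (x_1,…,x_N) ∈ Ω^N. -/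

import Mathlib

open MeasureTheory Finset
open scoped BigOperators RealInnerProductSpace
open Fin.NatCast

noncomputable section

/-- `ℝ^d` as a Euclidean space. -/
abbrev Ed (d : ℕ) := EuclideanSpace ℝ (Fin d)

/-- The cyclic permutation `σ(x₁,…,x_N) = (x₂,…,x_N,x₁)` acting on tuples. -/
def cyc {N : ℕ} {α : Type*} (x : Fin N → α) : Fin N → α := x ∘ finRotate N

/-- The `(N-1)`-tuple `(u 1, …, u (N-1))` is jointly `N`-monotone on `Ω`:
for every cycle `x 1, …, x (2N-1)` of points of `Ω` with `x (N+i) = x i` for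
`1 ≤ i ≤ N-1`, one has `∑_{i=1}^{N} ∑_{ℓ=1}^{N-1} ⟨u ℓ (x i), x i - x (i+ℓ)⟩ ≥ 0`. -/
def JointlyNMonotone (N : ℕ) {d : ℕ} (Ω : Set (Ed d)) (u : ℕ → Ed d → Ed d) : Prop :=
  ∀ x : ℕ → Ed d,
    (∀ i, 1 ≤ i → i ≤ 2 * N - 1 → x i ∈ Ω) →
    (∀ i, 1 ≤ i → i ≤ N - 1 → x (N + i) = x i) →
    0 ≤ ∑ i ∈ Icc 1 N, ∑ ℓ ∈ Icc 1 (N - 1), ⟪u ℓ (x i), x i - x (i + ℓ)⟫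

/-- `H` is `N`-sub-antisymmetric on `Ω^N` : `∑_{i=0}^{N-1} H(σ^i x) ≤ 0` on `Ω^N`. -/
def NSubAntisymmetric (N : ℕ) {d : ℕ} (Ω : Set (Ed d)) (H : (Fin N → Ed d) → ℝ) : Prop :=
  ∀ x : Fin N → Ed d, (∀ i, x i ∈ Ω) → ∑ i ∈ range N, H (cyc^[i] x) ≤ 0

/-- `H` is `N`-antisymmetric on `Ω^N` : `∑_{i=0}^{N-1} H(σ^i x) = 0` on `Ω^N`. -/
def NAntisymmetric (N : ℕ) {d : ℕ} (Ω : Set (Ed d)) (H : (Fin N → Ed d) → ℝ) : Prop :=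
  ∀ x : Fin N → Ed d, (∀ i, x i ∈ Ω) → ∑ i ∈ range N, H (cyc^[i] x) = 0

/-- `u` is `N`-cyclically monotone on `Ω`: for every cycle `x 1, …, x N, x (N+1) = x 1`
of points of `Ω`, `∑_{i=1}^{N} ⟨u (x i), x i - x (i+1)⟩ ≥ 0`. -/
def NCyclicallyMonotone (N : ℕ) {d : ℕ} (Ω : Set (Ed d)) (u : Ed d → Ed d) : Prop :=
  ∀ x : ℕ → Ed d,
    (∀ i, 1 ≤ i → i ≤ N → x i ∈ Ω) → x (N + 1) = x 1 →
    0 ≤ ∑ i ∈ Icc 1 N, ⟪u (x i), x i - x (i + 1)⟫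

/-- `f(x₁,…,x_N) = ∑_{ℓ=1}^{N-1} ⟨u ℓ (x₁), x₁ - x_{ℓ+1}⟩`. -/
def fJoint (N : ℕ) {d : ℕ} [NeZero N] (u : ℕ → Ed d → Ed d) (x : Fin N → Ed d) : ℝ :=
  ∑ ℓ ∈ Icc 1 (N - 1), ⟪u ℓ (x 0), x 0 - x (ℓ : Fin N)⟫

/-- The convexification of `f` in its first variable:
`f̃(x₁,…,x_N) = inf { ∑ λₖ f(x₁ᵏ, x₂,…,x_N) : λₖ ≥ 0, ∑ λₖ = 1, x₁ᵏ ∈ Ω, ∑ λₖ x₁ᵏ = x₁ }`. -/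
def convexify₁ (N : ℕ) {d : ℕ} [NeZero N] (Ω : Set (Ed d)) (f : (Fin N → Ed d) → ℝ)
    (x : Fin N → Ed d) : ℝ :=
  sInf {r : ℝ | ∃ n : ℕ, ∃ lam : Fin n → ℝ, ∃ z : Fin n → Ed d,
    (∀ k, 0 ≤ lam k) ∧ (∑ k, lam k = 1) ∧ (∀ k, z k ∈ Ω) ∧
    (∑ k, lam k • z k = x 0) ∧
    r = ∑ k, lam k * f (Function.update x 0 (z k))}

section Aux

variable {d : ℕ}

lemma L2 {N : ℕ} {n : Fin N → ℕ} (lam : ∀ i, Fin (n i) → ℝ)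
    (hlam1 : ∀ i, ∑ k, lam i k = 1) {j j' : Fin N} (hjj : j ≠ j')
    (α : Fin (n j) → ℝ) (β : Fin (n j') → ℝ) :
    ∑ κ : (∀ i, Fin (n i)), (∏ i, lam i (κ i)) * (α (κ j) * β (κ j'))
      = (∑ k, lam j k * α k) * (∑ k, lam j' k * β k) := by
  classical
  set g : ∀ i, Fin (n i) → ℝ := fun i k =>
    lam i k * ((if h : i = j then α (h ▸ k) else 1) * (if h : i = j' then β (h ▸ k) else 1))
    with hg
  have key : ∀ κ : (∀ i, Fin (n i)),
      (∏ i, lam i (κ i)) * (α (κ j) * β (κ j')) = ∏ i, g i (κ i) := by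
    intro κ
    have h1 : (∏ i, g i (κ i)) = (∏ i, lam i (κ i)) *
        ((∏ i, (if h : i = j then α (h ▸ κ i) else 1)) *
         (∏ i, (if h : i = j' then β (h ▸ κ i) else 1))) := by
      rw [← Finset.prod_mul_distrib, ← Finset.prod_mul_distrib]
    have h2 : (∏ i, (if h : i = j then α (h ▸ κ i) else 1)) = α (κ j) := by
      rw [Finset.prod_eq_single j (fun i _ hij => dif_neg hij) (by simp)]
      simp
    have h3 : (∏ i, (if h : i = j' then β (h ▸ κ i) else 1)) = β (κ j') := by
      rw [Finset.prod_eq_single j' (fun i _ hij => dif_neg hij) (by simp)]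
      simp
    rw [h1, h2, h3]
  rw [Finset.sum_congr rfl (fun κ _ => key κ), ← Fintype.prod_sum]
  have hval : ∀ i : Fin N, (∑ k, g i k) =
      if h : i = j then (∑ k, lam j k * α k) else
        (if h : i = j' then (∑ k, lam j' k * β k) else 1) := by
    intro i
    by_cases h : i = j
    · subst h
      rw [dif_pos rfl]
      refine Finset.sum_congr rfl fun k _ => ?_
      rw [hg]; simp [hjj]
    · rw [dif_neg h]
      by_cases h' : i = j'
      · subst h'
        rw [dif_pos rfl]
        refine Finset.sum_congr rfl fun k _ => ?_
        rw [hg]; simp [h]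
      · rw [dif_neg h']
        have : ∀ k, g i k = lam i k := by intro k; rw [hg]; simp [h, h']
        rw [Finset.sum_congr rfl fun k _ => this k, hlam1 i]
  rw [Finset.prod_congr rfl (fun i _ => hval i)]
  rw [Finset.prod_eq_mul_prod_sdiff_singleton_of_mem (Finset.mem_univ j)]
  rw [dif_pos rfl]
  have hj' : j' ∈ Finset.univ \ {j} := by simp [Ne.symm hjj]
  rw [Finset.prod_eq_mul_prod_sdiff_singleton_of_mem hj', dif_neg (Ne.symm hjj), dif_pos rfl]
  rw [Finset.prod_eq_one (fun i hi => by
    simp only [Finset.mem_sdiff, Finset.mem_singleton] at hi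
    rw [dif_neg hi.1.2, dif_neg hi.2]), mul_one]

end Aux

lemma L2' {N : ℕ} {n : Fin N → ℕ} (lam : ∀ i, Fin (n i) → ℝ)
    (hlam1 : ∀ i, ∑ k, lam i k = 1) {j j' : Fin N} (hjj : j ≠ j')
    (ψ : Fin (n j) → Fin (n j') → ℝ) :
    ∑ κ : (∀ i, Fin (n i)), (∏ i, lam i (κ i)) * ψ (κ j) (κ j')
      = ∑ k, ∑ k', lam j k * (lam j' k' * ψ k k') := by
  classical
  have expand : ∀ (a : Fin (n j)) (b : Fin (n j')),
      ψ a b = ∑ p, ∑ q, ((if a = p then (1:ℝ) else 0) * (if b = q then (1:ℝ) else 0)) * ψ p q := by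
    intro a b
    rw [Finset.sum_eq_single a (fun p _ hp => by
      rw [Finset.sum_eq_zero]; intro q _; rw [if_neg (fun h => hp h.symm)]; ring) (by simp)]
    rw [Finset.sum_eq_single b (fun q _ hq => by simp [Ne.symm hq]) (by simp)]
    simp
  calc ∑ κ : (∀ i, Fin (n i)), (∏ i, lam i (κ i)) * ψ (κ j) (κ j')
      = ∑ κ : (∀ i, Fin (n i)), ∑ p, ∑ q,
          ((∏ i, lam i (κ i)) * ((if κ j = p then (1:ℝ) else 0) * (if κ j' = q then (1:ℝ) else 0))) * ψ p q := by
        refine Finset.sum_congr rfl fun κ _ => ?_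
        rw [expand (κ j) (κ j'), Finset.mul_sum]
        refine Finset.sum_congr rfl fun p _ => ?_
        rw [Finset.mul_sum]
        refine Finset.sum_congr rfl fun q _ => ?_
        ring
    _ = ∑ p, ∑ q, (∑ κ : (∀ i, Fin (n i)),
          (∏ i, lam i (κ i)) * ((if κ j = p then (1:ℝ) else 0) * (if κ j' = q then (1:ℝ) else 0))) * ψ p q := by
        rw [Finset.sum_comm]
        refine Finset.sum_congr rfl fun p _ => ?_
        rw [Finset.sum_comm]
        refine Finset.sum_congr rfl fun q _ => ?_
        rw [← Finset.sum_mul]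
    _ = ∑ k, ∑ k', lam j k * (lam j' k' * ψ k k') := by
        refine Finset.sum_congr rfl fun p _ => ?_
        have := L2 lam hlam1 hjj (fun a => if a = p then (1:ℝ) else 0)
        refine Finset.sum_congr rfl fun q _ => ?_
        rw [L2 lam hlam1 hjj (fun a => if a = p then (1:ℝ) else 0) (fun b => if b = q then (1:ℝ) else 0)]
        rw [Finset.sum_eq_single p (fun a _ ha => by rw [if_neg ha]; ring) (by simp), if_pos rfl, mul_one]
        rw [Finset.sum_eq_single q (fun b _ hb => by rw [if_neg hb]; ring) (by simp), if_pos rfl, mul_one]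
        ring

lemma L1 {N : ℕ} {n : Fin N → ℕ} (lam : ∀ i, Fin (n i) → ℝ)
    (hlam1 : ∀ i, ∑ k, lam i k = 1) {j j' : Fin N} (hjj : j ≠ j')
    (φ : Fin (n j) → ℝ) :
    ∑ κ : (∀ i, Fin (n i)), (∏ i, lam i (κ i)) * φ (κ j)
      = ∑ k, lam j k * φ k := by
  have := L2' lam hlam1 hjj (fun a _ => φ a)
  simp only [← Finset.sum_mul, ← Finset.mul_sum, hlam1 j'] at this
  rw [this]
  refine Finset.sum_congr rfl fun k _ => by ring

lemma finCast_lemma {N : ℕ} [NeZero N] {ℓ : ℕ} (h1 : 1 ≤ ℓ) (h2 : ℓ < N) :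
    ((ℓ : Fin N) : ℕ) = ℓ ∧ (ℓ : Fin N) ≠ 0 := by
  have hv : ((ℓ : Fin N) : ℕ) = ℓ := Fin.val_cast_of_lt h2
  refine ⟨hv, fun h => ?_⟩
  rw [h] at hv
  simp only [Fin.val_zero] at hv
  omega

lemma cyc_iter {N : ℕ} [NeZero N] (x : Fin N → Ed d) (i : ℕ) (j : Fin N) :
    (cyc^[i] x) j = x (j + (i : Fin N)) := by
  induction i generalizing x with
  | zero => simp
  | succ m ih =>
    rw [Function.iterate_succ_apply, ih (cyc x)]
    have hN : ∃ n, N = n + 1 := ⟨N - 1, by have := NeZero.pos N; omega⟩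
    obtain ⟨n, rfl⟩ := hN
    show x (finRotate (n+1) (j + (m : Fin (n+1)))) = _
    rw [finRotate_succ_apply]
    congr 1
    push_cast
    exact add_assoc _ _ _

lemma sum_Icc_cast {N : ℕ} [NeZero N] (g : Fin N → ℝ) :
    ∑ i ∈ Icc 1 N, g ((i : ℕ) : Fin N) = ∑ j, g j := by
  have hNpos : 0 < N := NeZero.pos N
  refine Finset.sum_nbij' (fun i => ((i : ℕ) : Fin N))
    (fun j => if (j : ℕ) = 0 then N else (j : ℕ)) ?_ ?_ ?_ ?_ ?_
  · intro i _; exact Finset.mem_univ _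
  · intro j _
    by_cases h : (j : ℕ) = 0
    · simp only [h, if_pos]
      simp [Finset.mem_Icc]; omega
    · simp only [if_neg h, Finset.mem_Icc]
      have := j.isLt
      omega
  · intro i hi
    simp only [Finset.mem_Icc] at hi
    by_cases h : i = N
    · subst h; simp
    · have hlt : i < N := by omega
      rw [Fin.val_cast_of_lt hlt, if_neg (by omega : ¬ i = 0)]
  · intro j _
    by_cases h : (j : ℕ) = 0
    · have hj : j = 0 := by ext; simpa using h
      rw [if_pos h, hj]
      simp
    · rw [if_neg h, Fin.cast_val_eq_self]
  · intro i _; rfl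

lemma fJoint_update {N : ℕ} [NeZero N] (u : ℕ → Ed d → Ed d)
    (x : Fin N → Ed d) (w : Ed d) :
    fJoint N u (Function.update x 0 w) = ∑ ℓ ∈ Icc 1 (N - 1), ⟪u ℓ w, w - x (ℓ : Fin N)⟫ := by
  unfold fJoint
  rw [Function.update_self]
  refine Finset.sum_congr rfl fun ℓ hℓ => ?_
  simp only [Finset.mem_Icc] at hℓ
  have := NeZero.pos N
  rw [Function.update_of_ne (finCast_lemma hℓ.1 (by omega) : _ ∧ _).2]

lemma keyIneq {N : ℕ} [NeZero N] (hN : 2 ≤ N) (Ω : Set (Ed d))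
    (u : ℕ → Ed d → Ed d) (hmono : JointlyNMonotone N Ω u)
    {n : Fin N → ℕ} (lam : ∀ i, Fin (n i) → ℝ) (z : ∀ i, Fin (n i) → Ed d)
    (hlam0 : ∀ i k, 0 ≤ lam i k) (hlam1 : ∀ i, ∑ k, lam i k = 1)
    (hz : ∀ i k, z i k ∈ Ω) (x : Fin N → Ed d)
    (hbar : ∀ i, ∑ k, lam i k • z i k = x i) :
    0 ≤ ∑ j : Fin N, ∑ k, lam j k *
        ∑ ℓ ∈ Icc 1 (N-1), ⟪u ℓ (z j k), z j k - x (j + (ℓ : Fin N))⟫ := by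
  classical
  have hT : ∀ κ : (∀ i, Fin (n i)),
      0 ≤ ∑ j : Fin N, ∑ ℓ ∈ Icc 1 (N-1),
        ⟪u ℓ (z j (κ j)), z j (κ j) - z (j + (ℓ : Fin N)) (κ (j + (ℓ : Fin N)))⟫ := by
    intro κ
    have h0 := hmono (fun m => z (m : Fin N) (κ (m : Fin N)))
      (fun i _ _ => hz _ _)
      (fun i _ _ => by
        congr 1 <;> rw [Nat.cast_add, Fin.natCast_self, zero_add])
    calc (0:ℝ) ≤ _ := h0
      _ = ∑ j : Fin N, ∑ ℓ ∈ Icc 1 (N-1),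
          ⟪u ℓ (z j (κ j)), z j (κ j) - z (j + (ℓ:Fin N)) (κ (j + (ℓ:Fin N)))⟫ := by
        rw [← sum_Icc_cast (fun j => ∑ ℓ ∈ Icc 1 (N-1),
          ⟪u ℓ (z j (κ j)), z j (κ j) - z (j + (ℓ:Fin N)) (κ (j + (ℓ:Fin N)))⟫)]
        refine Finset.sum_congr rfl fun i _ => Finset.sum_congr rfl fun ℓ _ => ?_
        rw [Nat.cast_add]
  have h2 : 0 ≤ ∑ κ : (∀ i, Fin (n i)), (∏ i, lam i (κ i)) *
      (∑ j : Fin N, ∑ ℓ ∈ Icc 1 (N-1),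
        ⟪u ℓ (z j (κ j)), z j (κ j) - z (j + (ℓ:Fin N)) (κ (j + (ℓ:Fin N)))⟫) :=
    Finset.sum_nonneg fun κ _ =>
      mul_nonneg (Finset.prod_nonneg fun i _ => hlam0 i (κ i)) (hT κ)
  refine le_trans h2 (le_of_eq ?_)
  calc ∑ κ : (∀ i, Fin (n i)), (∏ i, lam i (κ i)) *
      (∑ j : Fin N, ∑ ℓ ∈ Icc 1 (N-1),
        ⟪u ℓ (z j (κ j)), z j (κ j) - z (j + (ℓ:Fin N)) (κ (j + (ℓ:Fin N)))⟫)
      = ∑ j : Fin N, ∑ ℓ ∈ Icc 1 (N-1), ∑ κ : (∀ i, Fin (n i)),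
          (∏ i, lam i (κ i)) *
            ⟪u ℓ (z j (κ j)), z j (κ j) - z (j + (ℓ:Fin N)) (κ (j + (ℓ:Fin N)))⟫ := by
        simp only [Finset.mul_sum]
        rw [Finset.sum_comm]
        exact Finset.sum_congr rfl fun j _ => Finset.sum_comm
    _ = ∑ j : Fin N, ∑ ℓ ∈ Icc 1 (N-1), ∑ k,
          lam j k * ⟪u ℓ (z j k), z j k - x (j + (ℓ:Fin N))⟫ := by
        refine Finset.sum_congr rfl fun j _ => Finset.sum_congr rfl fun ℓ hℓ => ?_
        simp only [Finset.mem_Icc] at hℓ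
        have hℓc := finCast_lemma (N := N) hℓ.1 (by omega)
        have hjj : j ≠ j + (ℓ:Fin N) := by
          intro h
          exact hℓc.2 (by rwa [left_eq_add] at h)
        rw [L2' lam hlam1 hjj
          (fun k k' => ⟪u ℓ (z j k), z j k - z (j + (ℓ:Fin N)) k'⟫)]
        refine Finset.sum_congr rfl fun k _ => ?_
        rw [← Finset.mul_sum]
        congr 1
        have expand : ∀ k', lam (j + (ℓ:Fin N)) k' *
            ⟪u ℓ (z j k), z j k - z (j + (ℓ:Fin N)) k'⟫
            = ⟪u ℓ (z j k), lam (j + (ℓ:Fin N)) k' • z j k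
                - lam (j + (ℓ:Fin N)) k' • z (j + (ℓ:Fin N)) k'⟫ := by
          intro k'
          rw [← smul_sub, real_inner_smul_right]
        rw [Finset.sum_congr rfl fun k' _ => expand k', ← inner_sum]
        congr 1
        rw [Finset.sum_sub_distrib, ← Finset.sum_smul, hlam1, one_smul, hbar]
    _ = ∑ j : Fin N, ∑ k, lam j k *
          ∑ ℓ ∈ Icc 1 (N-1), ⟪u ℓ (z j k), z j k - x (j + (ℓ : Fin N))⟫ := by
        refine Finset.sum_congr rfl fun j _ => ?_
        rw [Finset.sum_comm]
        refine Finset.sum_congr rfl fun k _ => ?_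
        rw [← Finset.mul_sum]

lemma fJoint_bound {N : ℕ} [NeZero N] (Ω : Set (Ed d))
    (hΩbdd : Bornology.IsBounded Ω) (u : ℕ → Ed d → Ed d)
    (hubdd : ∀ ℓ ∈ Icc 1 (N - 1), ∃ C : ℝ, ∀ x ∈ Ω, ‖u ℓ x‖ ≤ C) :
    ∃ M : ℝ, ∀ y : Fin N → Ed d, (∀ i, y i ∈ Ω) → |fJoint N u y| ≤ M := by
  obtain ⟨R, hR⟩ := hΩbdd.exists_norm_le
  have hC : ∀ ℓ : ℕ, ∃ C : ℝ, 0 ≤ C ∧ (ℓ ∈ Icc 1 (N-1) → ∀ w ∈ Ω, ‖u ℓ w‖ ≤ C) := by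
    intro ℓ
    by_cases h : ℓ ∈ Icc 1 (N-1)
    · obtain ⟨C, hCb⟩ := hubdd ℓ h
      exact ⟨max C 0, le_max_right _ _, fun _ w hw => le_trans (hCb w hw) (le_max_left _ _)⟩
    · exact ⟨0, le_rfl, fun h' => absurd h' h⟩
  choose C hC0 hCb using hC
  refine ⟨∑ ℓ ∈ Icc 1 (N-1), C ℓ * (2 * R), fun y hy => ?_⟩
  unfold fJoint
  refine le_trans (Finset.abs_sum_le_sum_abs _ _) (Finset.sum_le_sum fun ℓ hℓ => ?_)
  refine le_trans (abs_real_inner_le_norm _ _) ?_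
  have h1 : ‖u ℓ (y 0)‖ ≤ C ℓ := hCb ℓ hℓ _ (hy 0)
  have h2 : ‖y 0 - y (ℓ : Fin N)‖ ≤ 2 * R := by
    refine le_trans (norm_sub_le _ _) ?_
    have := hR _ (hy 0); have := hR _ (hy (ℓ : Fin N)); linarith
  exact mul_le_mul h1 h2 (norm_nonneg _) (hC0 ℓ)

/-- The set over which `convexify₁` takes an infimum. -/
def Sset (N : ℕ) {d : ℕ} [NeZero N] (Ω : Set (Ed d)) (f : (Fin N → Ed d) → ℝ)
    (x : Fin N → Ed d) : Set ℝ :=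
  {r : ℝ | ∃ n : ℕ, ∃ lam : Fin n → ℝ, ∃ z : Fin n → Ed d,
    (∀ k, 0 ≤ lam k) ∧ (∑ k, lam k = 1) ∧ (∀ k, z k ∈ Ω) ∧
    (∑ k, lam k • z k = x 0) ∧
    r = ∑ k, lam k * f (Function.update x 0 (z k))}

lemma convexify₁_eq_sInf {N : ℕ} [NeZero N] (Ω : Set (Ed d)) (f : (Fin N → Ed d) → ℝ)
    (x : Fin N → Ed d) : convexify₁ N Ω f x = sInf (Sset N Ω f x) := rfl

lemma mem_Sset_self {N : ℕ} [NeZero N] {Ω : Set (Ed d)} (f : (Fin N → Ed d) → ℝ)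
    {x : Fin N → Ed d} (hx : x 0 ∈ Ω) : f x ∈ Sset N Ω f x := by
  refine ⟨1, fun _ => 1, fun _ => x 0, fun _ => zero_le_one, by simp, fun _ => hx, by simp, ?_⟩
  simp [Function.update_eq_self]

lemma update_mem {N : ℕ} [NeZero N] {Ω : Set (Ed d)} {y : Fin N → Ed d} {w : Ed d}
    (hy : ∀ i, y i ∈ Ω) (hw : w ∈ Ω) : ∀ i, Function.update y 0 w i ∈ Ω := by
  intro i
  by_cases h : i = 0
  · subst h; rw [Function.update_self]; exact hw
  · rw [Function.update_of_ne h]; exact hy i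

lemma Sset_lb {N : ℕ} [NeZero N] {Ω : Set (Ed d)} {u : ℕ → Ed d → Ed d} {M : ℝ}
    (hM : ∀ y : Fin N → Ed d, (∀ i, y i ∈ Ω) → |fJoint N u y| ≤ M)
    {x : Fin N → Ed d} (hx : ∀ i, x i ∈ Ω) :
    ∀ r ∈ Sset N Ω (fJoint N u) x, -M ≤ r := by
  rintro r ⟨n, lam, z, h0, h1, hz, hbar, rfl⟩
  have hterm : ∀ k : Fin n, -M * lam k ≤ lam k * fJoint N u (Function.update x 0 (z k)) := by
    intro k
    have hlow : -M ≤ fJoint N u (Function.update x 0 (z k)) :=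
      neg_le_of_abs_le (hM _ (update_mem hx (hz k)))
    calc -M * lam k = lam k * (-M) := by ring
      _ ≤ _ := mul_le_mul_of_nonneg_left hlow (h0 k)
  calc -M = ∑ k : Fin n, -M * lam k := by rw [← Finset.mul_sum, h1, mul_one]
    _ ≤ _ := Finset.sum_le_sum fun k _ => hterm k

lemma Sset_bddBelow {N : ℕ} [NeZero N] {Ω : Set (Ed d)} {u : ℕ → Ed d → Ed d} {M : ℝ}
    (hM : ∀ y : Fin N → Ed d, (∀ i, y i ∈ Ω) → |fJoint N u y| ≤ M)
    {x : Fin N → Ed d} (hx : ∀ i, x i ∈ Ω) :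
    BddBelow (Sset N Ω (fJoint N u) x) :=
  ⟨-M, fun r hr => Sset_lb hM hx r hr⟩

theorem statement4 {d : ℕ} (N : ℕ) [NeZero N] (hN : 2 ≤ N)
    (Ω : Set (Ed d)) (hΩopen : IsOpen Ω) (hΩconv : Convex ℝ Ω)
    (hΩbdd : Bornology.IsBounded Ω) (hΩne : Ω.Nonempty)
    (u : ℕ → Ed d → Ed d)
    (hubdd : ∀ ℓ ∈ Icc 1 (N - 1), ∃ C : ℝ, ∀ x ∈ Ω, ‖u ℓ x‖ ≤ C)
    (hmono : JointlyNMonotone N Ω u) :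
    -- (1) `f ≥ f̃` on `Ω^N`
    (∀ x : Fin N → Ed d, (∀ i, x i ∈ Ω) →
      convexify₁ N Ω (fJoint N u) x ≤ fJoint N u x) ∧
    -- (2a) `f̃` is convex in the first variable
    (∀ x : Fin N → Ed d, (∀ i, x i ∈ Ω) →
      ConvexOn ℝ Ω (fun z => convexify₁ N Ω (fJoint N u) (Function.update x 0 z))) ∧
    -- (2b) `f̃` is concave in the last `N-1` variables
    (∀ x₁ ∈ Ω, ConcaveOn ℝ {y : Fin N → Ed d | ∀ i, y i ∈ Ω}
      (fun y => convexify₁ N Ω (fJoint N u) (Function.update y 0 x₁))) ∧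
    -- (3) `f̃(x,…,x) = 0` for every `x ∈ Ω`
    (∀ x ∈ Ω, convexify₁ N Ω (fJoint N u) (fun _ => x) = 0) ∧
    -- (4) `∑_{i=0}^{N-1} f̃(σ^i x) ≥ 0` on `Ω^N`
    (∀ x : Fin N → Ed d, (∀ i, x i ∈ Ω) →
      0 ≤ ∑ i ∈ range N, convexify₁ N Ω (fJoint N u) (cyc^[i] x)) := by
  classical
  have hNpos : 0 < N := NeZero.pos N
  obtain ⟨M, hM⟩ := fJoint_bound Ω hΩbdd u hubdd
  -- (1)
  have part1 : ∀ x : Fin N → Ed d, (∀ i, x i ∈ Ω) →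
      convexify₁ N Ω (fJoint N u) x ≤ fJoint N u x := fun x hx =>
    csInf_le (Sset_bddBelow hM hx) (mem_Sset_self _ (hx 0))
  -- (4)
  have part4 : ∀ x : Fin N → Ed d, (∀ i, x i ∈ Ω) →
      0 ≤ ∑ i ∈ range N, convexify₁ N Ω (fJoint N u) (cyc^[i] x) := by
    intro x hx
    have hcx : ∀ (m : ℕ) (i : Fin N), (cyc^[m] x) i ∈ Ω := fun m i => by
      rw [cyc_iter]; exact hx _
    refine le_of_forall_pos_le_add fun ε hε => ?_
    have hεN : 0 < ε / N := div_pos hε (by exact_mod_cast hNpos)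
    have hsel : ∀ j : Fin N, ∃ r ∈ Sset N Ω (fJoint N u) (cyc^[(j:ℕ)] x),
        r < sInf (Sset N Ω (fJoint N u) (cyc^[(j:ℕ)] x)) + ε / N := fun j =>
      Real.lt_sInf_add_pos ⟨_, mem_Sset_self _ (hcx (j:ℕ) 0)⟩ hεN
    choose r hrmem hrlt using hsel
    choose n lam z hlam0 hlam1 hzΩ hbar hr using hrmem
    have hbar' : ∀ j : Fin N, ∑ k, lam j k • z j k = x j := by
      intro j
      rw [hbar j, cyc_iter, zero_add, Fin.cast_val_eq_self]
    have key := keyIneq hN Ω u hmono lam z hlam0 hlam1 hzΩ x hbar'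
    have hrval : ∀ j : Fin N, r j = ∑ k, lam j k *
        ∑ ℓ ∈ Icc 1 (N-1), ⟪u ℓ (z j k), z j k - x (j + (ℓ : Fin N))⟫ := by
      intro j
      rw [hr j]
      refine Finset.sum_congr rfl fun k _ => ?_
      congr 1
      rw [fJoint_update]
      refine Finset.sum_congr rfl fun ℓ _ => ?_
      rw [cyc_iter, Fin.cast_val_eq_self, add_comm]
    have hsum : 0 ≤ ∑ j : Fin N, r j := by
      rw [Finset.sum_congr rfl fun j _ => hrval j]
      exact key
    have hle : ∑ j : Fin N, r j ≤
        (∑ i ∈ range N, convexify₁ N Ω (fJoint N u) (cyc^[i] x)) + ε := by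
      calc ∑ j : Fin N, r j
          ≤ ∑ j : Fin N, (convexify₁ N Ω (fJoint N u) (cyc^[(j:ℕ)] x) + ε / N) :=
            Finset.sum_le_sum fun j _ => le_of_lt (hrlt j)
        _ = (∑ j : Fin N, convexify₁ N Ω (fJoint N u) (cyc^[(j:ℕ)] x)) + N * (ε / N) := by
            rw [Finset.sum_add_distrib, Finset.sum_const, Finset.card_univ, Fintype.card_fin,
              nsmul_eq_mul]
        _ = (∑ i ∈ range N, convexify₁ N Ω (fJoint N u) (cyc^[i] x)) + ε := by
            rw [Fin.sum_univ_eq_sum_range (fun i => convexify₁ N Ω (fJoint N u) (cyc^[i] x))]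
            congr 1
            field_simp
    linarith
  -- (3)
  have part3 : ∀ x ∈ Ω, convexify₁ N Ω (fJoint N u) (fun _ => x) = 0 := by
    intro x hx
    have hconst : ∀ m : ℕ, cyc^[m] (fun _ : Fin N => x) = fun _ => x := by
      intro m; funext j; rw [cyc_iter]
    have h4 := part4 (fun _ => x) (fun _ => hx)
    rw [Finset.sum_congr rfl (fun m _ => by rw [hconst m]), Finset.sum_const,
      Finset.card_range, nsmul_eq_mul] at h4
    have hge : 0 ≤ convexify₁ N Ω (fJoint N u) (fun _ => x) := by
      by_contra h
      push_neg at h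
      nlinarith [show (0:ℝ) < N by exact_mod_cast hNpos]
    have hle : convexify₁ N Ω (fJoint N u) (fun _ => x) ≤ 0 := by
      have := part1 (fun _ => x) (fun _ => hx)
      have hzero : fJoint N u (fun _ : Fin N => x) = 0 := by
        unfold fJoint
        refine Finset.sum_eq_zero fun ℓ _ => ?_
        simp
      linarith
    linarith
  refine ⟨part1, ?_, ?_, part3, part4⟩
  -- (2a)
  · intro x hx
    refine ⟨hΩconv, fun p hp q hq a b ha hb hab => ?_⟩
    simp only [smul_eq_mul]
    refine le_of_forall_pos_le_add fun ε hε => ?_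
    have hnep : (Sset N Ω (fJoint N u) (Function.update x 0 p)).Nonempty :=
      ⟨_, mem_Sset_self _ (by rw [Function.update_self]; exact hp)⟩
    have hneq : (Sset N Ω (fJoint N u) (Function.update x 0 q)).Nonempty :=
      ⟨_, mem_Sset_self _ (by rw [Function.update_self]; exact hq)⟩
    obtain ⟨r1, hr1mem, hr1lt⟩ := Real.lt_sInf_add_pos hnep hε
    obtain ⟨r2, hr2mem, hr2lt⟩ := Real.lt_sInf_add_pos hneq hε
    obtain ⟨n1, lam1, w1, h10, h11, h1Ω, h1bar, h1r⟩ := hr1mem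
    obtain ⟨n2, lam2, w2, h20, h21, h2Ω, h2bar, h2r⟩ := hr2mem
    rw [Function.update_self] at h1bar h2bar
    have hcomb : a • p + b • q ∈ Ω := hΩconv hp hq ha hb hab
    have hmem : a * r1 + b * r2 ∈
        Sset N Ω (fJoint N u) (Function.update x 0 (a • p + b • q)) := by
      refine ⟨n1 + n2, Fin.append (fun k => a * lam1 k) (fun k => b * lam2 k),
        Fin.append w1 w2, ?_, ?_, ?_, ?_, ?_⟩
      · intro k
        refine Fin.addCases (fun i => ?_) (fun i => ?_) k
        · rw [Fin.append_left]; exact mul_nonneg ha (h10 i)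
        · rw [Fin.append_right]; exact mul_nonneg hb (h20 i)
      · rw [Fin.sum_univ_add]
        simp only [Fin.append_left, Fin.append_right]
        rw [← Finset.mul_sum, ← Finset.mul_sum, h11, h21, mul_one, mul_one, hab]
      · intro k
        refine Fin.addCases (fun i => ?_) (fun i => ?_) k
        · rw [Fin.append_left]; exact h1Ω i
        · rw [Fin.append_right]; exact h2Ω i
      · rw [Function.update_self, Fin.sum_univ_add]
        simp only [Fin.append_left, Fin.append_right]
        have e1 : ∀ i : Fin n1, (a * lam1 i) • w1 i = a • (lam1 i • w1 i) :=
          fun i => mul_smul a _ _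
        have e2 : ∀ i : Fin n2, (b * lam2 i) • w2 i = b • (lam2 i • w2 i) :=
          fun i => mul_smul b _ _
        rw [Finset.sum_congr rfl fun i _ => e1 i, ← Finset.smul_sum, h1bar,
          Finset.sum_congr rfl fun i _ => e2 i, ← Finset.smul_sum, h2bar]
      · rw [Fin.sum_univ_add]
        simp only [Fin.append_left, Fin.append_right, Function.update_idem]
        rw [h1r, h2r]
        simp only [Function.update_idem]
        rw [Finset.mul_sum, Finset.mul_sum]
        congr 1 <;> exact Finset.sum_congr rfl fun i _ => by ring
    have hstep := csInf_le (Sset_bddBelow hM (update_mem hx hcomb)) hmem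
    have h1' : a * r1 ≤ a * (convexify₁ N Ω (fJoint N u) (Function.update x 0 p) + ε) :=
      mul_le_mul_of_nonneg_left (le_of_lt hr1lt) ha
    have h2' : b * r2 ≤ b * (convexify₁ N Ω (fJoint N u) (Function.update x 0 q) + ε) :=
      mul_le_mul_of_nonneg_left (le_of_lt hr2lt) hb
    have hring : a * (convexify₁ N Ω (fJoint N u) (Function.update x 0 p) + ε)
        + b * (convexify₁ N Ω (fJoint N u) (Function.update x 0 q) + ε)
        = a * convexify₁ N Ω (fJoint N u) (Function.update x 0 p)
          + b * convexify₁ N Ω (fJoint N u) (Function.update x 0 q) + ε := by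
      linear_combination ε * hab
    rw [convexify₁_eq_sInf]
    linarith
  -- (2b)
  · intro x₁ hx₁
    constructor
    · intro y1 h1 y2 h2 a b ha hb hab i
      simpa using hΩconv (h1 i) (h2 i) ha hb hab
    · intro y1 h1 y2 h2 a b ha hb hab
      simp only [smul_eq_mul, Set.mem_setOf_eq] at h1 h2 ⊢
      refine le_csInf ⟨_, mem_Sset_self _ (by rw [Function.update_self]; exact hx₁)⟩ ?_
      rintro rr ⟨n, lam, zz, h0, h1s, hzΩ, hbarr, rfl⟩
      rw [Function.update_self] at hbarr
      have hsplit : ∀ k, fJoint N u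
          (Function.update (Function.update (a•y1+b•y2) 0 x₁) 0 (zz k))
          = a * fJoint N u (Function.update (Function.update y1 0 x₁) 0 (zz k))
            + b * fJoint N u (Function.update (Function.update y2 0 x₁) 0 (zz k)) := by
        intro k
        simp only [Function.update_idem]
        rw [fJoint_update, fJoint_update, fJoint_update, Finset.mul_sum, Finset.mul_sum,
          ← Finset.sum_add_distrib]
        refine Finset.sum_congr rfl fun ℓ _ => ?_
        have hYl : (a•y1+b•y2) (ℓ:Fin N) = a • y1 (ℓ:Fin N) + b • y2 (ℓ:Fin N) := rfl
        have h3 : (a+b) • zz k = zz k := by rw [hab, one_smul]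
        have hdecomp : zz k - (a • y1 (ℓ:Fin N) + b • y2 (ℓ:Fin N))
            = a • (zz k - y1 (ℓ:Fin N)) + b • (zz k - y2 (ℓ:Fin N)) := by
          calc zz k - (a • y1 (ℓ:Fin N) + b • y2 (ℓ:Fin N))
              = (a+b) • zz k - (a • y1 (ℓ:Fin N) + b • y2 (ℓ:Fin N)) := by rw [h3]
            _ = a • (zz k - y1 (ℓ:Fin N)) + b • (zz k - y2 (ℓ:Fin N)) := by
                rw [add_smul, smul_sub, smul_sub]; abel
        rw [hYl, hdecomp, inner_add_right, real_inner_smul_right, real_inner_smul_right]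
      have hr1mem : (∑ k, lam k * fJoint N u
          (Function.update (Function.update y1 0 x₁) 0 (zz k)))
          ∈ Sset N Ω (fJoint N u) (Function.update y1 0 x₁) :=
        ⟨n, lam, zz, h0, h1s, hzΩ, by rw [Function.update_self]; exact hbarr, rfl⟩
      have hr2mem : (∑ k, lam k * fJoint N u
          (Function.update (Function.update y2 0 x₁) 0 (zz k)))
          ∈ Sset N Ω (fJoint N u) (Function.update y2 0 x₁) :=
        ⟨n, lam, zz, h0, h1s, hzΩ, by rw [Function.update_self]; exact hbarr, rfl⟩
      have hle1 := csInf_le (Sset_bddBelow hM (update_mem h1 hx₁)) hr1mem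
      have hle2 := csInf_le (Sset_bddBelow hM (update_mem h2 hx₁)) hr2mem
      have hsum : ∑ k, lam k * fJoint N u
          (Function.update (Function.update (a•y1+b•y2) 0 x₁) 0 (zz k))
          = a * (∑ k, lam k * fJoint N u
              (Function.update (Function.update y1 0 x₁) 0 (zz k)))
            + b * (∑ k, lam k * fJoint N u
              (Function.update (Function.update y2 0 x₁) 0 (zz k))) := by
        rw [Finset.mul_sum, Finset.mul_sum, ← Finset.sum_add_distrib]
        refine Finset.sum_congr rfl fun k _ => ?_
        rw [hsplit k]; ring
      rw [hsum]
      have ha1 : a * convexify₁ N Ω (fJoint N u) (Function.update y1 0 x₁)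
          ≤ a * ∑ k, lam k * fJoint N u
            (Function.update (Function.update y1 0 x₁) 0 (zz k)) :=
        mul_le_mul_of_nonneg_left hle1 ha
      have hb1 : b * convexify₁ N Ω (fJoint N u) (Function.update y2 0 x₁)
          ≤ b * ∑ k, lam k * fJoint N u
            (Function.update (Function.update y2 0 x₁) 0 (zz k)) :=
        mul_le_mul_of_nonneg_left hle2 hb
      linarith
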